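/- Let a, b, c be coprime positive integers with min{a,b,c} > 1. If (x,y,z) and (x',y',z') are two positive integer solutions of a^x + b^y = c^z with y > y' and z ≤ z', then x < x', b^(y−y')·c^(z'−z) > a^x, and 0 < log c / log a − x'/z' < 2/(z' · a^x · log a). -/

import Mathlib

set_option maxHeartbeats 1000000 in
theorem stmt_13 (a b c x y z x' y' z' : ℕ)
    (ha : 1 < a) (hb : 1 < b) (hc : 1 < c)
    (hab : Nat.Coprime a b) (hbc : Nat.Coprime b c) (hac : Nat.Coprime a c)
    (hx : 0 < x) (hy : 0 < y) (hz : 0 < z)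
    (hx' : 0 < x') (hy' : 0 < y') (hz' : 0 < z')
    (heq : a ^ x + b ^ y = c ^ z) (heq' : a ^ x' + b ^ y' = c ^ z')
    (hyy : y > y') (hzz : z ≤ z') :
    x < x' ∧ b ^ (y - y') * c ^ (z' - z) > a ^ x ∧
    0 < Real.log c / Real.log a - (x' : ℝ) / z' ∧
    Real.log c / Real.log a - (x' : ℝ) / z' <
      2 / ((z' : ℝ) * (a : ℝ) ^ x * Real.log a) := by
  -- Part 1 : x < x'
  have hxx : x < x' := by
    by_contra h
    push_neg at h
    have h1 : a ^ x' ≤ a ^ x := Nat.pow_le_pow_right (le_of_lt ha) h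
    have h2 : b ^ y' < b ^ y := Nat.pow_lt_pow_right hb hyy
    have h3 : c ^ z' < c ^ z := by omega
    have h4 : z' < z := (Nat.pow_lt_pow_iff_right hc).mp h3
    omega
  -- Part 2 : B := b^(y-y') * c^(z'-z) > a^x
  set B := b ^ (y - y') * c ^ (z' - z) with hBdef
  have hB1 : 1 < B := by
    have h1 : b ^ 1 ≤ b ^ (y - y') := Nat.pow_le_pow_right (le_of_lt hb) (by omega)
    have h2 : 1 ≤ c ^ (z' - z) := Nat.one_le_pow _ _ (by omega)
    calc 1 < b ^ (y - y') * 1 := by simpa using lt_of_lt_of_le hb (by simpa using h1)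
    _ ≤ B := Nat.mul_le_mul_left _ h2
  have e1 : (b:ℤ) ^ (y - y') * b ^ y' = b ^ y := by
    rw [← pow_add]; congr 1; omega
  have e2 : (c:ℤ) ^ (z' - z) * c ^ z = c ^ z' := by
    rw [← pow_add]; congr 1; omega
  have e3 : (a:ℤ) ^ x + b ^ y = c ^ z := by exact_mod_cast heq
  have e4 : (a:ℤ) ^ x' + b ^ y' = c ^ z' := by exact_mod_cast heq'
  have key : (b:ℤ) ^ y' * c ^ z * ((B:ℤ) - 1) = c ^ z * a ^ x' - a ^ x * c ^ z' := by
    have hBc : (B:ℤ) = (b:ℤ) ^ (y - y') * c ^ (z' - z) := by push_cast [hBdef]; ring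
    rw [hBc]
    linear_combination (c:ℤ) ^ (z' - z) * (c:ℤ) ^ z * e1 + (b:ℤ) ^ y * e2 +
      (c:ℤ) ^ z' * e3 - (c:ℤ) ^ z * e4
  have hdvdZ : (a:ℤ) ^ x ∣ (b:ℤ) ^ y' * c ^ z * ((B:ℤ) - 1) := by
    rw [key]
    exact dvd_sub (Dvd.dvd.mul_left (pow_dvd_pow (a:ℤ) hxx.le) _) (Dvd.dvd.mul_right dvd_rfl _)
  have hdvdN : a ^ x ∣ b ^ y' * c ^ z * (B - 1) := by
    have hc1 : ((B:ℤ) - 1) = ((B - 1 : ℕ) : ℤ) := by omega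
    rw [hc1] at hdvdZ
    exact_mod_cast hdvdZ
  have hcop : Nat.Coprime (a ^ x) (b ^ y' * c ^ z) :=
    Nat.Coprime.mul_right (Nat.Coprime.pow _ _ hab) (Nat.Coprime.pow _ _ hac)
  have hdvdB : a ^ x ∣ B - 1 := (Nat.Coprime.dvd_of_dvd_mul_left hcop) hdvdN
  have hBa : a ^ x < B := by
    have := Nat.le_of_dvd (by omega) hdvdB
    omega
  -- identity a^x' = c^(z'-z) * a^x + (B-1) * b^y'
  have keyid : (a:ℤ) ^ x' = c ^ (z' - z) * a ^ x + ((B:ℤ) - 1) * b ^ y' := by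
    have hBc : (B:ℤ) = (b:ℤ) ^ (y - y') * c ^ (z' - z) := by push_cast [hBdef]; ring
    rw [hBc]
    linear_combination e4 - (c:ℤ) ^ (z' - z) * e3 - (c:ℤ) ^ (z' - z) * e1 - e2
  -- a^x * (1 + b^y') ≤ a^x'
  have hineq : (a:ℤ) ^ x * (1 + b ^ y') ≤ (a:ℤ) ^ x' := by
    have h1 : (1:ℤ) ≤ c ^ (z' - z) := by
      have : 1 ≤ c ^ (z' - z) := Nat.one_le_pow _ _ (by omega)
      exact_mod_cast this
    have h2 : ((a:ℤ)) ^ x ≤ (B:ℤ) - 1 := by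
      have : (a ^ x : ℕ) ≤ B - 1 := Nat.le_of_dvd (by omega) hdvdB
      have := (Nat.cast_le (α := ℤ)).mpr this
      push_cast [Nat.cast_sub hB1.le] at this
      linarith
    have h3 : (0:ℤ) < b ^ y' := by positivity
    have h4 : (0:ℤ) < a ^ x := by positivity
    nlinarith [keyid]
  -- real preliminaries
  have haR : (1:ℝ) < a := by exact_mod_cast ha
  have hcR : (1:ℝ) < c := by exact_mod_cast hc
  have hla : 0 < Real.log a := Real.log_pos haR
  have hlc : 0 < Real.log c := Real.log_pos hcR
  have hz'R : (0:ℝ) < z' := by exact_mod_cast hz'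
  have hax'pos : (0:ℝ) < (a:ℝ) ^ x' := by positivity
  have haxpos : (0:ℝ) < (a:ℝ) ^ x := by positivity
  have hby'pos : (0:ℝ) < (b:ℝ) ^ y' := by positivity
  have heqR' : (a:ℝ) ^ x' + (b:ℝ) ^ y' = (c:ℝ) ^ z' := by exact_mod_cast heq'
  have haltc : (a:ℝ) ^ x' < (c:ℝ) ^ z' := by linarith
  -- Part 3
  have part3 : 0 < Real.log c / Real.log a - (x' : ℝ) / z' := by
    rw [sub_pos, div_lt_div_iff₀ hz'R hla]
    have h1 : Real.log ((a:ℝ) ^ x') < Real.log ((c:ℝ) ^ z') :=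
      Real.log_lt_log hax'pos haltc
    rw [Real.log_pow, Real.log_pow] at h1
    push_cast at h1 ⊢
    linarith
  -- Part 4
  have hD : (z' : ℝ) * Real.log c - (x' : ℝ) * Real.log a < 2 / (a:ℝ) ^ x := by
    have hu : Real.log ((c:ℝ) ^ z' / (a:ℝ) ^ x') <
        (c:ℝ) ^ z' / (a:ℝ) ^ x' - 1 := by
      apply Real.log_lt_sub_one_of_pos (by positivity)
      have : (1:ℝ) < (c:ℝ) ^ z' / (a:ℝ) ^ x' := (one_lt_div hax'pos).mpr haltc
      linarith
    rw [Real.log_div (by positivity) (by positivity), Real.log_pow, Real.log_pow] at hu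
    have hu2 : ((c:ℝ) ^ z' / (a:ℝ) ^ x' - 1) = (b:ℝ) ^ y' / (a:ℝ) ^ x' := by
      field_simp
      linarith
    rw [hu2] at hu
    have hineqR : (a:ℝ) ^ x * (1 + (b:ℝ) ^ y') ≤ (a:ℝ) ^ x' := by exact_mod_cast hineq
    have h5 : (b:ℝ) ^ y' / (a:ℝ) ^ x' < 2 / (a:ℝ) ^ x := by
      rw [div_lt_div_iff₀ hax'pos haxpos]
      nlinarith
    linarith
  have part4 : Real.log c / Real.log a - (x' : ℝ) / z' <
      2 / ((z' : ℝ) * (a : ℝ) ^ x * Real.log a) := by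
    have key4 : Real.log c / Real.log a - (x' : ℝ) / z' =
        ((z' : ℝ) * Real.log c - (x' : ℝ) * Real.log a) / ((z' : ℝ) * Real.log a) := by
      field_simp
    rw [key4, div_lt_div_iff₀ (by positivity) (by positivity)]
    have hD2 : ((z' : ℝ) * Real.log c - (x' : ℝ) * Real.log a) * (a:ℝ) ^ x < 2 :=
      (lt_div_iff₀ haxpos).mp hD
    have h6 := mul_lt_mul_of_pos_right hD2 (mul_pos hz'R hla)
    nlinarith [h6]
  exact ⟨hxx, hBa, part3, part4⟩
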